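/- arXiv:1211.5630 — 5 statements merged into one kernel-verified Lean document; each statement's English description precedes it below -/
import Mathlib

section
/- Let p be an odd prime not dividing the integer D, where D is a quadratic non-residue mod p. Then the group of solutions to x^2 - D y^2 = 1 in F_p × F_p under the operation (x1, y1) ⊕ (x2, y2) = (x1 x2 + D y1 y2, x1 y2 + x2 y1) is cyclic of order p + 1. -/
open Polynomial

/-- The solution set of the Pell conic. -/
abbrev PellSol (p : ℕ) (D : ℤ) : Type :=
  {v : ZMod p × ZMod p // v.1 ^ 2 - (D : ZMod p) * v.2 ^ 2 = 1}

namespace PellSol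

variable {p : ℕ} {D : ℤ}

/-- multiplication -/
def pm (a b : PellSol p D) : PellSol p D :=
  ⟨(a.val.1 * b.val.1 + (D : ZMod p) * a.val.2 * b.val.2,
      a.val.1 * b.val.2 + a.val.2 * b.val.1),
    by linear_combination (b.val.1 ^ 2 - (D : ZMod p) * b.val.2 ^ 2) * a.property + b.property⟩

/-- identity -/
def pone : PellSol p D := ⟨(1, 0), by norm_num⟩

/-- inverse -/
def pinv (a : PellSol p D) : PellSol p D :=
  ⟨(a.val.1, -a.val.2), by linear_combination a.property⟩

lemma pm_assoc (a b c : PellSol p D) : pm (pm a b) c = pm a (pm b c) :=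
  Subtype.ext (Prod.ext (by dsimp [pm]; ring) (by dsimp [pm]; ring))

lemma pm_comm (a b : PellSol p D) : pm a b = pm b a :=
  Subtype.ext (Prod.ext (by dsimp [pm]; ring) (by dsimp [pm]; ring))

lemma pone_pm (a : PellSol p D) : pm pone a = a :=
  Subtype.ext (Prod.ext (by dsimp [pm, pone]; ring) (by dsimp [pm, pone]; ring))

lemma pm_pone (a : PellSol p D) : pm a pone = a :=
  Subtype.ext (Prod.ext (by dsimp [pm, pone]; ring) (by dsimp [pm, pone]; ring))

lemma pinv_pm (a : PellSol p D) : pm (pinv a) a = pone := by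
  refine Subtype.ext (Prod.ext ?_ ?_) <;> dsimp [pm, pinv, pone]
  · linear_combination a.property
  · ring

end PellSol

/-- The group structure on the Pell conic. -/
def pellGroup (p : ℕ) (D : ℤ) : CommGroup (PellSol p D) where
  mul := PellSol.pm
  one := PellSol.pone
  inv := PellSol.pinv
  mul_assoc := PellSol.pm_assoc
  one_mul := PellSol.pone_pm
  mul_one := PellSol.pm_pone
  inv_mul_cancel := PellSol.pinv_pm
  mul_comm := PellSol.pm_comm

theorem pell_key (p : ℕ) [Fact p.Prime] (hp : p ≠ 2) (D : ℤ)
    (hD : ¬ (p : ℤ) ∣ D) (hNR : ¬ IsSquare (D : ZMod p)) :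
    Nat.card (PellSol p D) = p + 1 ∧
      @IsCyclic (PellSol p D) (@ZPow.toPow _ (pellGroup p D).toDivInvMonoid.toZPow) := by
  letI := pellGroup p D
  have hprime : p.Prime := Fact.out
  set d : ZMod p := (D : ZMod p) with hd
  have hd0 : d ≠ 0 := by
    rw [hd, Ne, ZMod.intCast_zmod_eq_zero_iff_dvd]; exact hD
  set f : (ZMod p)[X] := X ^ 2 - C d with hf
  have hfm : f.Monic := monic_X_pow_sub_C d (by norm_num)
  have hirr : Irreducible f :=
    X_pow_sub_C_irreducible_of_prime Nat.prime_two (fun b hb => hNR ⟨b, by rw [← hb]; ring⟩)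
  haveI : Fact (Irreducible f) := ⟨hirr⟩
  set K := AdjoinRoot f with hK
  set s : K := AdjoinRoot.root f with hsdef
  set i : ZMod p →+* K := algebraMap (ZMod p) K with hidef
  have hi : Function.Injective i := i.injective
  have hs : s ^ 2 = i d := by
    have h0 : (AdjoinRoot.mk f) (X ^ 2 - C d) = 0 := by rw [← hf]; exact AdjoinRoot.mk_self
    rw [map_sub, map_pow, AdjoinRoot.mk_X, sub_eq_zero] at h0
    exact h0
  -- representation
  have hrep : ∀ z : K, ∃ x y : ZMod p, z = i x + s * i y := by
    intro z
    obtain ⟨g, rfl⟩ := AdjoinRoot.mk_surjective z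
    refine ⟨(g %ₘ f).coeff 0, (g %ₘ f).coeff 1, ?_⟩
    conv_lhs => rw [← modByMonic_add_div g f]
    rw [map_add, map_mul, AdjoinRoot.mk_self, zero_mul, add_zero]
    have hdeg : (g %ₘ f).degree ≤ 1 := by
      have h2 := degree_modByMonic_lt g hfm
      have hfdeg : f.degree = 2 := by rw [hf]; exact degree_X_pow_sub_C (by norm_num) d
      rw [hfdeg] at h2
      exact Order.le_of_lt_succ (by exact_mod_cast h2)
    conv_lhs => rw [eq_X_add_C_of_degree_le_one hdeg]
    rw [map_add, map_mul, AdjoinRoot.mk_X, AdjoinRoot.mk_C, AdjoinRoot.mk_C]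
    rw [hidef, AdjoinRoot.algebraMap_eq]
    show AdjoinRoot.of f _ * s + AdjoinRoot.of f _ = _
    ring
  -- injectivity
  have hinj : ∀ x y x' y' : ZMod p, i x + s * i y = i x' + s * i y' → x = x' ∧ y = y' := by
    intro x y x' y' h
    by_cases hy : y = y'
    · subst hy
      refine ⟨hi ?_, rfl⟩
      exact add_right_cancel h
    · exfalso
      have hyne : y - y' ≠ 0 := sub_ne_zero.mpr hy
      have hyne' : i (y - y') ≠ 0 := fun h0 => hyne (hi (by rw [h0, map_zero]))
      have h1 : s * i (y - y') = i (x' - x) := by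
        rw [map_sub, map_sub]; linear_combination h
      have hsc : s = i ((x' - x) * (y - y')⁻¹) := by
        rw [map_mul, map_inv₀]
        exact (eq_mul_inv_iff_mul_eq₀ hyne').mpr h1
      have hdc : i d = i (((x' - x) * (y - y')⁻¹) ^ 2) := by
        rw [map_pow, ← hsc, hs]
      exact hNR ⟨(x' - x) * (y - y')⁻¹, by rw [hi hdc]; ring⟩
  -- Euler criterion
  have heuler : d ^ (p / 2) = -1 :=
    (ZMod.pow_div_two_eq_neg_one_or_one p hd0).resolve_left
      (fun h1 => hNR (hd ▸ (ZMod.euler_criterion p hd0).mpr h1))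
  haveI : CharP K p := charP_of_injective_algebraMap hi p
  have hodd : p % 2 = 1 := Nat.odd_iff.mp (hprime.odd_of_ne_two hp)
  have hps : s ^ p = -s := by
    have h1 : s ^ p = (s ^ 2) ^ (p / 2) * s := by
      rw [← pow_mul, ← pow_succ]
      congr 1
      omega
    rw [h1, hs, ← map_pow, heuler, map_neg, map_one]
    ring
  have hfrob : ∀ x y : ZMod p, (i x + s * i y) ^ p = i x - s * i y := by
    intro x y
    rw [add_pow_char, mul_pow, ← map_pow, ← map_pow, ZMod.pow_card, ZMod.pow_card, hps]
    ring
  have hnorm : ∀ x y : ZMod p, (i x + s * i y) ^ (p + 1) = i (x ^ 2 - d * y ^ 2) := by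
    intro x y
    rw [pow_succ, hfrob, map_sub, map_mul, map_pow, map_pow]
    linear_combination (- (i y ^ 2)) * hs
  -- the equivalence with (p+1)-st roots of unity in K
  have hpp : 0 < p + 1 := Nat.succ_pos p
  have hmemT : ∀ z : K, z ∈ nthRootsFinset (p + 1) (1 : K) ↔ z ^ (p + 1) = 1 := fun z =>
    mem_nthRootsFinset hpp (1 : K)
  have hto : ∀ v : PellSol p D, (i v.val.1 + s * i v.val.2) ^ (p + 1) = 1 := by
    intro v
    have h8 : v.val.1 ^ 2 - d * v.val.2 ^ 2 = 1 := v.property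
    rw [hnorm, h8, map_one]
  have e : PellSol p D ≃ {z : K // z ∈ nthRootsFinset (p + 1) (1 : K)} := by
    refine Equiv.ofBijective
      (fun v => ⟨i v.val.1 + s * i v.val.2, (hmemT _).mpr (hto v)⟩) ⟨?_, ?_⟩
    · intro a b hab
      obtain ⟨h3, h4⟩ := hinj _ _ _ _ (congrArg Subtype.val hab)
      exact Subtype.ext (Prod.ext h3 h4)
    · rintro ⟨z, hz⟩
      obtain ⟨x, y, rfl⟩ := hrep z
      have h5 : i (x ^ 2 - d * y ^ 2) = i 1 := by
        rw [map_one, ← hnorm, (hmemT _).mp hz]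
      have h6 : x ^ 2 - d * y ^ 2 = 1 := hi h5
      exact ⟨⟨(x, y), by rw [← hd]; exact h6⟩, rfl⟩
  -- counting roots of unity
  have hf0 : f ≠ 0 := hfm.ne_zero
  have hdim : (AdjoinRoot.powerBasis hf0).dim = 2 := by
    show f.natDegree = 2
    rw [hf]
    exact natDegree_X_pow_sub_C
  letI : Fintype K := Module.fintypeOfFintype (AdjoinRoot.powerBasis hf0).basis
  have hcardK : Fintype.card K = p ^ 2 := by
    rw [Module.card_fintype (AdjoinRoot.powerBasis hf0).basis, ZMod.card, Fintype.card_fin, hdim]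
  obtain ⟨g, hg⟩ := IsCyclic.exists_generator (α := Kˣ)
  have hog : orderOf g = p ^ 2 - 1 := by
    rw [orderOf_eq_card_of_forall_mem_zpowers hg, Nat.card_eq_fintype_card, Fintype.card_units, hcardK]
  have hpos : 1 ≤ p := hprime.one_lt.le.trans' (by norm_num)
  have hfac : p ^ 2 - 1 = (p + 1) * (p - 1) := by
    have h2 : 2 ≤ p := hprime.two_le
    have h1 : 1 ≤ p ^ 2 := Nat.one_le_pow _ _ (by omega)
    zify [h1, show 1 ≤ p by omega]
    ring
  have hoζ : orderOf (g ^ (p - 1)) = p + 1 := by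
    rw [orderOf_pow, hog, hfac, Nat.gcd_mul_left_left, Nat.mul_div_cancel _ (show 0 < p - 1 by have := hprime.two_le; omega)]
  have hζK : IsPrimitiveRoot ((g ^ (p - 1) : Kˣ) : K) (p + 1) := by
    have h7 := IsPrimitiveRoot.orderOf ((g ^ (p - 1) : Kˣ) : K)
    rwa [orderOf_units, hoζ] at h7
  have hT : (nthRootsFinset (p + 1) (1 : K)).card = p + 1 := hζK.card_nthRootsFinset
  constructor
  · rw [Nat.card_congr e, Nat.card_eq_finsetCard, hT]
  · refine isCyclic_of_subgroup_isDomain (R := K) (G := PellSol p D)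
      ⟨⟨fun v => i v.val.1 + s * i v.val.2, ?_⟩, ?_⟩ ?_
    · show i 1 + s * i 0 = 1
      rw [map_one, map_zero, mul_zero, add_zero]
    · intro a b
      show i (a.val.1 * b.val.1 + d * a.val.2 * b.val.2) + s * i (a.val.1 * b.val.2 + a.val.2 * b.val.1)
        = (i a.val.1 + s * i a.val.2) * (i b.val.1 + s * i b.val.2)
      rw [map_add, map_add, map_mul, map_mul, map_mul, map_mul, map_mul]
      linear_combination (- (i a.val.2 * i b.val.2)) * hs
    · intro a b hab
      obtain ⟨h3, h4⟩ := hinj _ _ _ _ hab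
      exact Subtype.ext (Prod.ext h3 h4)

/-- Let `p` be an odd prime not dividing the integer `D`, with `D` a quadratic
non-residue mod `p`. Then the group of solutions of `x^2 - D y^2 = 1` in
`F_p × F_p`, under `(x₁,y₁) ⊕ (x₂,y₂) = (x₁x₂ + D y₁y₂, x₁y₂ + x₂y₁)` with
identity `(1, 0)`, is cyclic of order `p + 1`. -/
theorem pell_conic_cyclic_nonresidue (p : ℕ) [Fact p.Prime] (hp : p ≠ 2) (D : ℤ)
    (hD : ¬ (p : ℤ) ∣ D) (hNR : ¬ IsSquare (D : ZMod p)) :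
    ∃ G : CommGroup {v : ZMod p × ZMod p // v.1 ^ 2 - (D : ZMod p) * v.2 ^ 2 = 1},
      (G.one : {v : ZMod p × ZMod p // v.1 ^ 2 - (D : ZMod p) * v.2 ^ 2 = 1}).val = (1, 0) ∧
      (∀ x y : {v : ZMod p × ZMod p // v.1 ^ 2 - (D : ZMod p) * v.2 ^ 2 = 1},
        (G.mul x y).val =
          (x.val.1 * y.val.1 + (D : ZMod p) * x.val.2 * y.val.2,
           x.val.1 * y.val.2 + x.val.2 * y.val.1)) ∧
      Nat.card {v : ZMod p × ZMod p // v.1 ^ 2 - (D : ZMod p) * v.2 ^ 2 = 1} = p + 1 ∧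
      @IsCyclic _ (@ZPow.toPow _ G.toDivInvMonoid.toZPow) := by
  obtain ⟨hcard, hcyc⟩ := pell_key p hp D hD hNR
  exact ⟨pellGroup p D, rfl, fun x y => rfl, hcard, hcyc⟩
end

section
/- Let f be an odd prime not dividing D, and suppose the 2×2 matrix M = [[a, D*b], [b, a]] over Z/fZ satisfies M^(2k) = I for some positive integer k and det(M) = 1 (i.e., a^2 - D b^2 = 1 in Z/fZ). Write M^k = [[A, D*B], [B, A]]. Then B = 0 in Z/fZ, i.e., M^k is a diagonal (scalar) matrix. -/
/-- Let `f` be an odd prime not dividing `D`, and `M = [[a, D*b], [b, a]]` over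
`Z/fZ` with `a^2 - D b^2 = 1` (so `det M = 1`) and `M^(2k) = I` for some `k > 0`.
Writing `M^k = [[A, D*B], [B, A]]`, we have `B = 0`, i.e. `M^k` is diagonal. -/
theorem pell_matrix_half_power_diagonal (f : ℕ) [Fact f.Prime] (hodd : f ≠ 2)
    (D : ℤ) (hD : (D : ZMod f) ≠ 0) (a b : ZMod f)
    (hdet : a ^ 2 - (D : ZMod f) * b ^ 2 = 1) (k : ℕ) (hk : 0 < k)
    (h2k : (!![a, (D : ZMod f) * b; b, a]) ^ (2 * k) = 1)
    (A B : ZMod f)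
    (hAB : (!![a, (D : ZMod f) * b; b, a]) ^ k = !![A, (D : ZMod f) * B; B, A]) :
    B = 0 := by
  have h2 : (!![A, (D : ZMod f) * B; B, A]) ^ 2 = 1 := by
    rw [← hAB, ← pow_mul, Nat.mul_comm k 2, h2k]
  have hsq : A * A + (D : ZMod f) * B * B = 1 := by
    have := congrFun (congrFun h2 0) 0
    simpa [pow_two, Matrix.mul_apply, Fin.sum_univ_two, Matrix.one_apply] using this
  have hdetk : A * A - (D : ZMod f) * B * B = 1 := by
    have := congrArg Matrix.det hAB
    rw [Matrix.det_pow] at this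
    simp [Matrix.det_fin_two] at this ⊢
    have hdM : a * a - (D : ZMod f) * b * b = 1 := by ring_nf; ring_nf at hdet; linear_combination hdet
    rw [hdM, one_pow] at this
    linear_combination -this
  have h2ne : (2 : ZMod f) ≠ 0 := by
    have hp := (Fact.out : f.Prime)
    intro h
    have hdvd : (f : ℕ) ∣ 2 := (ZMod.natCast_eq_zero_iff 2 f).mp (by exact_mod_cast h)
    exact hodd ((Nat.prime_dvd_prime_iff_eq hp Nat.prime_two).mp hdvd)
  have hBB : (D : ZMod f) * B * B = 0 := by
    have : 2 * ((D : ZMod f) * B * B) = 0 := by linear_combination hsq - hdetk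
    exact (mul_eq_zero.mp this).resolve_left h2ne
  have := mul_eq_zero.mp hBB
  rcases this with h | h
  · exact (mul_eq_zero.mp h).resolve_left hD
  · exact h
end

section
/- Let f be an odd prime not dividing 46, let (a_n, b_n) be defined by (a_n + b_n √46) = (24335 + 3588 √46)^n, and let ψ(f) = f - (46/f) where (46/f) is the Legendre symbol. If f divides b_{ψ(f)}, then f divides b_{ψ(f)/2}. -/
open Polynomial

/-- Key lemma: `(u^ψ).re ≡ 1 mod f`. -/
theorem pell46_re_psi_aux (f : ℕ) [Fact f.Prime] (hodd : f ≠ 2)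
    (h46 : ¬ (f : ℤ) ∣ 46) (ψ : ℕ) (hψ : (ψ : ℤ) = (f : ℤ) - legendreSym f 46)
    (him : (f : ℤ) ∣ (((⟨24335, 3588⟩ : ℤ√46)) ^ ψ).im) :
    ((((⟨24335, 3588⟩ : ℤ√46) ^ ψ).re : ℤ) : ZMod f) = 1 := by
  have hfp : f.Prime := Fact.out
  set u : ℤ√46 := (⟨24335, 3588⟩ : ℤ√46) with hu
  set g : (ZMod f)[X] := X ^ 2 - C 46 with hg
  have hdeg : g.degree = 2 := by rw [hg]; compute_degree!
  have hinj : Function.Injective (AdjoinRoot.of g) :=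
    AdjoinRoot.coe_injective (by rw [hdeg]; decide)
  haveI : CharP (AdjoinRoot g) f := charP_of_injective_ringHom hinj f
  set o : ZMod f →+* AdjoinRoot g := AdjoinRoot.of g with ho
  set r : AdjoinRoot g := AdjoinRoot.root g with hr
  have hr2 : r * r = ((46 : ℤ) : AdjoinRoot g) := by
    have h1 := AdjoinRoot.eval₂_root g
    rw [hg] at h1
    simp only [eval₂_sub, eval₂_pow, eval₂_X, eval₂_C, sub_eq_zero] at h1
    rw [← pow_two, h1, ← ho, ← map_intCast o 46]
    norm_num
  set φ : ℤ√46 →+* AdjoinRoot g := Zsqrtd.lift ⟨r, hr2⟩ with hφ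
  have hφz : ∀ z : ℤ√46, φ z = o ((z.re : ℤ) : ZMod f) + o ((z.im : ℤ) : ZMod f) * r := by
    intro z
    show ((z.re : ℤ) : AdjoinRoot g) + ((z.im : ℤ) : AdjoinRoot g) * r = _
    rw [map_intCast o, map_intCast o]
  set a : ZMod f := ((24335 : ℤ) : ZMod f) with ha
  set b : ZMod f := ((3588 : ℤ) : ZMod f) with hb
  have hφu : φ u = o a + o b * r := hφz u
  -- norm relation
  have hnorm : (o a + o b * r) * (o a - o b * r) = 1 := by
    have h2 : (o a + o b * r) * (o a - o b * r) = o (a * a) - o (b * b) * (r * r) := by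
      rw [map_mul, map_mul]; ring
    rw [h2, hr2, ← map_intCast o 46, ← map_mul, ← map_sub, ha, hb]
    have h3 : ((24335 * 24335 - 3588 * 3588 * 46 : ℤ) : ZMod f) = ((1 : ℤ) : ZMod f) := by
      norm_num
    push_cast at h3 ⊢
    rw [show ((24335 : ZMod f) * 24335 - 3588 * 3588 * 46) = ((1 : ZMod f)) by
      linear_combination h3]
    exact map_one o
  -- Frobenius
  have hfodd : f % 2 = 1 := Nat.odd_iff.mp (hfp.odd_of_ne_two hodd)
  have hrf : r ^ f = o ((legendreSym f 46 : ℤ) : ZMod f) * r := by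
    have h4 : f = 2 * (f / 2) + 1 := by omega
    calc r ^ f = (r * r) ^ (f / 2) * r := by
          rw [← pow_two, ← pow_mul, ← pow_succ, ← h4]
      _ = o (((46 : ℤ) : ZMod f) ^ (f / 2)) * r := by
          rw [hr2, ← map_intCast o 46, ← map_pow]
      _ = o ((legendreSym f 46 : ℤ) : ZMod f) * r := by
          rw [← legendreSym.eq_pow]
  have hfrob : (φ u) ^ f = o a + o ((legendreSym f 46 : ℤ) : ZMod f) * (o b * r) := by
    rw [hφu, add_pow_char, mul_pow, hrf, ← map_pow, ← map_pow, ZMod.pow_card, ZMod.pow_card]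
    ring
  have h46' : ((46 : ℤ) : ZMod f) ≠ 0 := by
    rwa [Ne, ZMod.intCast_zmod_eq_zero_iff_dvd]
  have hone : (φ u) ^ ψ = 1 := by
    rcases legendreSym.eq_one_or_neg_one (p := f) h46' with hε | hε
    · -- ψ = f - 1
      rw [hε] at hψ
      have hψ1 : ψ + 1 = f := by omega
      have hfrob' : (φ u) ^ f = φ u := by
        rw [hfrob, hε, hφu]; norm_num
      calc (φ u) ^ ψ = (φ u) ^ ψ * ((φ u) * (o a - o b * r)) := by
            rw [hφu] at *; rw [hnorm, mul_one]
        _ = (φ u) ^ (ψ + 1) * (o a - o b * r) := by ring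
        _ = (φ u) ^ f * (o a - o b * r) := by rw [hψ1]
        _ = (φ u) * (o a - o b * r) := by rw [hfrob']
        _ = 1 := by rw [hφu]; exact hnorm
    · -- ψ = f + 1
      rw [hε] at hψ
      have hψ1 : ψ = f + 1 := by omega
      have hfrob' : (φ u) ^ f = o a - o b * r := by
        rw [hfrob, hε]; push_cast; rw [map_neg, map_one]; ring
      rw [hψ1, pow_succ, hfrob', hφu, mul_comm]
      exact hnorm
  -- conclude
  have himz : (((u ^ ψ).im : ℤ) : ZMod f) = 0 := by
    rwa [ZMod.intCast_zmod_eq_zero_iff_dvd]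
  have h5 : φ (u ^ ψ) = 1 := by rw [map_pow, hone]
  rw [hφz, himz, map_zero, zero_mul, add_zero, ← map_one o] at h5
  exact hinj h5

/-- Let `f` be an odd prime not dividing `46`, let `(aₙ, bₙ)` be defined by
`aₙ + bₙ√46 = (24335 + 3588√46)^n`, and `ψ = f - (46/f)` (Legendre symbol).
If `f ∣ b_ψ`, then `f ∣ b_{ψ/2}`. -/
theorem pell46_half_psi_of_psi (f : ℕ) [Fact f.Prime] (hodd : f ≠ 2)
    (h46 : ¬ (f : ℤ) ∣ 46) (ψ : ℕ) (hψ : (ψ : ℤ) = (f : ℤ) - legendreSym f 46)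
    (hdvd : (f : ℤ) ∣ (((⟨24335, 3588⟩ : ℤ√46)) ^ ψ).im) :
    (f : ℤ) ∣ (((⟨24335, 3588⟩ : ℤ√46)) ^ (ψ / 2)).im := by
  have hfp : f.Prime := Fact.out
  set u : ℤ√46 := (⟨24335, 3588⟩ : ℤ√46) with hu
  have h46' : ((46 : ℤ) : ZMod f) ≠ 0 := by
    rwa [Ne, ZMod.intCast_zmod_eq_zero_iff_dvd]
  have hfodd : f % 2 = 1 := Nat.odd_iff.mp (hfp.odd_of_ne_two hodd)
  -- ψ is even
  have hψeven : ψ % 2 = 0 := by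
    rcases legendreSym.eq_one_or_neg_one (p := f) h46' with hε | hε <;> rw [hε] at hψ <;> omega
  set k : ℕ := ψ / 2 with hk
  have hψ2 : ψ = k * 2 := by omega
  set x : ℤ√46 := u ^ k with hx
  have hsq : u ^ ψ = x * x := by rw [hψ2, pow_mul, pow_two]
  -- norm of x is 1
  have hnx : x.re * x.re - 46 * x.im * x.im = 1 := by
    have h1 : Zsqrtd.norm x = (Zsqrtd.norm u) ^ k := by
      rw [hx]; exact map_pow (Zsqrtd.normMonoidHom) u k
    have h2 : Zsqrtd.norm u = 1 := by rw [hu, Zsqrtd.norm_def]; norm_num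
    rw [h2, one_pow] at h1
    rw [← Zsqrtd.norm_def, h1]
  have hprime : Prime (f : ℤ) := Nat.prime_iff_prime_int.mp hfp
  have hnd2 : ¬ (f : ℤ) ∣ 2 := by
    intro h
    have : (f : ℤ) ∣ ((2 : ℕ) : ℤ) := by exact_mod_cast h
    rw [Int.natCast_dvd_natCast] at this
    have h1 := Nat.le_of_dvd (by norm_num) this
    have h2 := hfp.two_le
    omega
  have him : (f : ℤ) ∣ 2 * (x.re * x.im) := by
    have : (u ^ ψ).im = 2 * (x.re * x.im) := by
      rw [hsq, Zsqrtd.im_mul]; ring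
    rwa [this] at hdvd
  rcases (hprime.dvd_mul.mp him) with h | h
  · exact absurd h hnd2
  rcases (hprime.dvd_mul.mp h) with h | h
  · -- f ∣ x.re : contradiction
    exfalso
    have hre1 := pell46_re_psi_aux f hodd h46 ψ hψ hdvd
    have hre0 : ((x.re : ℤ) : ZMod f) = 0 := by rwa [ZMod.intCast_zmod_eq_zero_iff_dvd]
    have hrecalc : (((u ^ ψ).re : ℤ) : ZMod f) = ((x.re * x.re + 46 * x.im * x.im : ℤ) : ZMod f) := by
      rw [hsq, Zsqrtd.re_mul]
    have hn : ((x.re * x.re - 46 * x.im * x.im : ℤ) : ZMod f) = 1 := by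
      rw [hnx]; norm_num
    push_cast at hrecalc hn
    rw [hre0] at hrecalc hn
    rw [hre1] at hrecalc
    -- hrecalc : 1 = 0 + 46*im², hn : 0 - 46*im² = 1
    have h2 : ((2 : ℕ) : ZMod f) = 0 := by push_cast; linear_combination hrecalc - hn
    rw [ZMod.natCast_eq_zero_iff] at h2
    have h3 := Nat.le_of_dvd (by norm_num) h2
    have h4 := hfp.two_le
    omega
  · exact h
end

section
/- Let f be an odd prime not dividing 46 and let (a_n, b_n) be the sequences with a_n + b_n √46 = (24335 + 3588 √46)^n. Let ψ(f) = f - (46/f) (Legendre symbol). Then f divides b_{ψ(f)/2}. -/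
open Polynomial

private lemma pell46_norm_fact :
    (⟨24335, 3588⟩ : ℤ√46) * star (⟨24335, 3588⟩ : ℤ√46) = 1 := by
  rw [Zsqrtd.mul_star]
  norm_num

private lemma pell46_aux (f : ℕ) [Fact f.Prime] (hodd : f ≠ 2) (h46 : ¬ (f : ℤ) ∣ 46)
    (K : Type) [Field K] (φK : ZMod f →+* K) (r : K) (hr : r * r = ((46 : ℤ) : K))
    (m : ℕ)
    (hu : (Zsqrtd.lift ⟨r, hr⟩ (⟨24335, 3588⟩ : ℤ√46)) ^ m *
          (Zsqrtd.lift ⟨r, hr⟩ (⟨24335, 3588⟩ : ℤ√46)) ^ m = 1) :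
    (f : ℤ) ∣ (((⟨24335, 3588⟩ : ℤ√46)) ^ m).im := by
  set α : ℤ√46 := ⟨24335, 3588⟩ with hα
  set φ : ℤ√46 →+* K := Zsqrtd.lift ⟨r, hr⟩ with hφ
  have huv : φ α ^ m * φ (star α) ^ m = 1 := by
    rw [← mul_pow, ← map_mul, pell46_norm_fact, map_one, one_pow]
  have hune : φ α ^ m ≠ 0 := left_ne_zero_of_mul_eq_one huv
  have hvm : φ (star α) ^ m = φ α ^ m := by
    apply mul_left_cancel₀ hune
    rw [huv, hu]
  have hdiff : φ (α ^ m) - φ (star (α ^ m)) = 2 * (((α ^ m).im : ℤ) : K) * r := by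
    simp only [Zsqrtd.lift_apply_apply, hφ, Zsqrtd.re_star, Zsqrtd.im_star]
    push_cast
    ring
  have hzero : 2 * (((α ^ m).im : ℤ) : K) * r = 0 := by
    rw [← hdiff, star_pow, map_pow, map_pow, hvm, sub_self]
  have h46K : ((46 : ℤ) : K) ≠ 0 := by
    have h46Z : ((46 : ℤ) : ZMod f) ≠ 0 := by
      rw [Ne, ZMod.intCast_zmod_eq_zero_iff_dvd]
      exact h46
    rw [← map_intCast φK]
    exact fun h => h46Z (φK.injective (by rw [h, map_zero]))
  have hrne : r ≠ 0 := fun h => h46K (by rw [← hr, h, mul_zero])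
  have h2ne : (2 : K) ≠ 0 := by
    have h2Z : ((2 : ℤ) : ZMod f) ≠ 0 := by
      rw [Ne, ZMod.intCast_zmod_eq_zero_iff_dvd]
      intro h
      have h1 : (f : ℤ) ≤ 2 := Int.le_of_dvd (by norm_num) h
      have h2 : 2 ≤ f := (Fact.out : f.Prime).two_le
      omega
    rw [show (2 : K) = ((2 : ℤ) : K) by push_cast; ring, ← map_intCast φK]
    exact fun h => h2Z (φK.injective (by rw [h, map_zero]))
  have : (((α ^ m).im : ℤ) : K) = 0 := by
    rcases mul_eq_zero.mp hzero with h | h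
    · rcases mul_eq_zero.mp h with h' | h'
      · exact absurd h' h2ne
      · exact h'
    · exact absurd h hrne
  rw [← map_intCast φK] at this
  have hz : (((α ^ m).im : ℤ) : ZMod f) = 0 := φK.injective (by rw [this, map_zero])
  rwa [ZMod.intCast_zmod_eq_zero_iff_dvd] at hz

private lemma pell46_frob (f : ℕ) [Fact f.Prime] (K : Type) [Field K] [CharP K f]
    (φK : ZMod f →+* K) (r : K) (hr : r * r = ((46 : ℤ) : K))
    (hrphi : r * r = φK ((46 : ℤ) : ZMod f))
    (hleg : (((46 : ℤ) : ZMod f)) ^ (f / 2) = -1) (hfodd : Odd f) :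
    (Zsqrtd.lift ⟨r, hr⟩ (⟨24335, 3588⟩ : ℤ√46)) ^ (f + 1) = 1 := by
  obtain ⟨k, hk⟩ := hfodd
  have hk2 : f / 2 = k := by omega
  have hrpow : r ^ f = -r := by
    have hrk : r ^ f = (r * r) ^ k * r := by
      rw [hk, pow_succ, pow_mul, sq]
    rw [hrk, hrphi, ← map_pow, ← hk2, hleg]
    simp
  have e1 : ((24335 : ℤ) : K) = φK ((24335 : ℤ) : ZMod f) := (map_intCast φK _).symm
  have e2 : ((3588 : ℤ) : K) = φK ((3588 : ℤ) : ZMod f) := (map_intCast φK _).symm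
  have hu : Zsqrtd.lift ⟨r, hr⟩ (⟨24335, 3588⟩ : ℤ√46)
      = ((24335 : ℤ) : K) + ((3588 : ℤ) : K) * r := by
    rw [Zsqrtd.lift_apply_apply]
  have hv : Zsqrtd.lift ⟨r, hr⟩ (star (⟨24335, 3588⟩ : ℤ√46))
      = ((24335 : ℤ) : K) - ((3588 : ℤ) : K) * r := by
    rw [Zsqrtd.lift_apply_apply]
    simp only [Zsqrtd.re_star, Zsqrtd.im_star]
    push_cast
    ring
  have hfrob : (Zsqrtd.lift ⟨r, hr⟩ (⟨24335, 3588⟩ : ℤ√46)) ^ f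
      = Zsqrtd.lift ⟨r, hr⟩ (star (⟨24335, 3588⟩ : ℤ√46)) := by
    rw [hu, hv, e1, e2, add_pow_char, mul_pow, ← map_pow, ← map_pow,
      ZMod.pow_card, ZMod.pow_card, hrpow]
    ring
  have hswap : star (⟨24335, 3588⟩ : ℤ√46) * (⟨24335, 3588⟩ : ℤ√46) = 1 := by
    rw [mul_comm]; exact pell46_norm_fact
  rw [pow_succ, hfrob, ← map_mul, hswap, map_one]

/-- Let `f` be an odd prime not dividing `46`, let `(aₙ, bₙ)` be defined by
`aₙ + bₙ√46 = (24335 + 3588√46)^n`, and `ψ = f - (46/f)` (Legendre symbol).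
Then `f ∣ b_{ψ/2}`. -/
theorem pell46_divides_half_psi (f : ℕ) [Fact f.Prime] (hodd : f ≠ 2)
    (h46 : ¬ (f : ℤ) ∣ 46) (ψ : ℕ) (hψ : (ψ : ℤ) = (f : ℤ) - legendreSym f 46) :
    (f : ℤ) ∣ (((⟨24335, 3588⟩ : ℤ√46)) ^ (ψ / 2)).im := by
  have hp : f.Prime := Fact.out
  have hfodd : Odd f := hp.odd_of_ne_two hodd
  have hf2 : 2 ≤ f := hp.two_le
  have h46Z : ((46 : ℤ) : ZMod f) ≠ 0 := by
    rw [Ne, ZMod.intCast_zmod_eq_zero_iff_dvd]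
    exact h46
  rcases legendreSym.eq_one_or_neg_one f (a := 46) h46Z with hl | hl
  · -- legendreSym = 1 : ψ = f - 1, work in ZMod f
    have hψ' : (ψ : ℤ) = (f : ℤ) - 1 := by rw [hψ, hl]
    obtain ⟨k, hk⟩ := hfodd
    have hm : ψ / 2 + ψ / 2 = f - 1 := by omega
    obtain ⟨r, hr⟩ := (legendreSym.eq_one_iff f h46Z).mp hl
    have hr' : r * r = ((46 : ℤ) : ZMod f) := hr.symm
    apply pell46_aux f hodd h46 (ZMod f) (RingHom.id _) r hr'
    rw [← pow_add, hm]
    have hune : (Zsqrtd.lift ⟨r, hr'⟩ (⟨24335, 3588⟩ : ℤ√46)) ≠ 0 := by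
      apply left_ne_zero_of_mul_eq_one (b := Zsqrtd.lift ⟨r, hr'⟩ (star (⟨24335, 3588⟩ : ℤ√46)))
      rw [← map_mul, pell46_norm_fact, map_one]
    exact ZMod.pow_card_sub_one_eq_one hune
  · -- legendreSym = -1 : ψ = f + 1, work in (ZMod f)[x]/(x² - 46)
    have hψ' : (ψ : ℤ) = (f : ℤ) + 1 := by rw [hψ, hl]; ring
    have hm : ψ / 2 + ψ / 2 = f + 1 := by
      obtain ⟨k, hk⟩ := hfodd
      omega
    have hleg : (((46 : ℤ) : ZMod f)) ^ (f / 2) = -1 := by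
      have heq := (legendreSym.eq_pow f 46).symm
      rw [hl] at heq
      rw [heq]
      simp
    have hnsq : ¬ IsSquare ((46 : ℤ) : ZMod f) := by
      intro hsq
      rw [← legendreSym.eq_one_iff f h46Z] at hsq
      rw [hl] at hsq
      norm_num at hsq
    have hirr : Irreducible (X ^ 2 - C ((46 : ℤ) : ZMod f)) := by
      apply X_pow_sub_C_irreducible_of_prime Nat.prime_two
      intro b hb
      exact hnsq ⟨b, by rw [← hb]; ring⟩
    haveI : Fact (Irreducible (X ^ 2 - C ((46 : ℤ) : ZMod f))) := ⟨hirr⟩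
    have hrphi : (AdjoinRoot.root (X ^ 2 - C ((46 : ℤ) : ZMod f))) *
        (AdjoinRoot.root (X ^ 2 - C ((46 : ℤ) : ZMod f)))
        = (AdjoinRoot.of _) ((46 : ℤ) : ZMod f) := by
      have h0 := AdjoinRoot.eval₂_root (X ^ 2 - C ((46 : ℤ) : ZMod f))
      rw [eval₂_sub, eval₂_pow, eval₂_X, eval₂_C, sub_eq_zero] at h0
      rw [← sq, h0]
    have hr : (AdjoinRoot.root (X ^ 2 - C ((46 : ℤ) : ZMod f))) *
        (AdjoinRoot.root (X ^ 2 - C ((46 : ℤ) : ZMod f)))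
        = ((46 : ℤ) : AdjoinRoot (X ^ 2 - C ((46 : ℤ) : ZMod f))) := by
      rw [hrphi]
      exact map_intCast _ 46
    haveI : CharP (AdjoinRoot (X ^ 2 - C ((46 : ℤ) : ZMod f))) f :=
      charP_of_injective_ringHom (AdjoinRoot.of _).injective f
    apply pell46_aux f hodd h46 _ (AdjoinRoot.of _) _ hr
    rw [← pow_add, hm]
    exact pell46_frob f _ (AdjoinRoot.of _) _ hr hrphi hleg hfodd
end

section
/- For every squarefree m with 1 < m < 46, writing the fundamental unit of Q(√m) as ε_m = (x + y√m)/c with c = 2 if m ≡ 1 mod 4 and c = 1 otherwise, m does not divide y; while for m = 46 with ε_46 = 24335 + 3588√46, m divides y. -/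
/-- `ε = (x + y√m)/c` is the fundamental unit of `ℚ(√m)` (with `c = 2` if
`m ≡ 1 mod 4` and `c = 1` otherwise): it is a unit of the maximal order (norm `±c²`,
integrality condition when `c = 2`), with `x, y > 0`, and it is the smallest such
unit greater than `1`. -/
def IsFundamentalUnit (m : ℕ) (x y : ℤ) : Prop :=
  0 < x ∧ 0 < y ∧
  (x ^ 2 - (m : ℤ) * y ^ 2 = (if m % 4 = 1 then (2:ℤ) else 1) ^ 2 ∨
   x ^ 2 - (m : ℤ) * y ^ 2 = -((if m % 4 = 1 then (2:ℤ) else 1) ^ 2)) ∧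
  (m % 4 = 1 → (2 : ℤ) ∣ (x - y)) ∧
  ∀ x' y' : ℤ, 0 < x' → 0 < y' →
    (x' ^ 2 - (m : ℤ) * y' ^ 2 = (if m % 4 = 1 then (2:ℤ) else 1) ^ 2 ∨
     x' ^ 2 - (m : ℤ) * y' ^ 2 = -((if m % 4 = 1 then (2:ℤ) else 1) ^ 2)) →
    (m % 4 = 1 → (2 : ℤ) ∣ (x' - y')) →
    (x : ℝ) + (y : ℝ) * Real.sqrt m ≤ (x' : ℝ) + (y' : ℝ) * Real.sqrt m


lemma no_sq {N s : ℤ} (h1 : 0 ≤ s) (h2 : s^2 < N) (h3 : N < (s+1)^2) : ∀ x : ℤ, x^2 ≠ N := by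
  intro x h
  subst h
  rcases le_or_gt 0 x with hx | hx
  · have h4 : s + 1 ≤ x := by nlinarith
    nlinarith
  · have h4 : s + 1 ≤ -x := by nlinarith
    nlinarith

set_option maxHeartbeats 1600000 in
lemma key (m : ℕ) (c X Y B : ℤ)
    (hc : (if m % 4 = 1 then (2:ℤ) else 1) = c)
    (hm2 : 2 ≤ (m:ℤ)) (hcm : c^2 < (m:ℤ)) (hc1 : 1 ≤ c)
    (hX : 0 < X) (hY : 0 < Y)
    (hPell : X^2 - (m:ℤ)*Y^2 = c^2 ∨ X^2 - (m:ℤ)*Y^2 = -c^2)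
    (hpar : m % 4 = 1 → (2:ℤ) ∣ (X - Y))
    (hBY : Y < 2*(B+1))
    (hB : (X + c)^2 ≤ (2*(B+1) - Y)^2 * m)
    (hnosq : ∀ k x : ℤ, 1 ≤ k → k * m ≤ B →
       x^2 ≠ (m:ℤ)*((m:ℤ)*k)^2 + c^2 ∧ x^2 ≠ (m:ℤ)*((m:ℤ)*k)^2 - c^2) :
    ∀ x y : ℤ, IsFundamentalUnit m x y → ¬ (m:ℤ) ∣ y := by
  rintro x y ⟨hx, hy, hpell, hpar', hmin⟩ ⟨k, hk⟩
  rw [hc] at hpell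
  have hmin' := hmin X Y hX hY (by rw [hc]; exact hPell) hpar
  have hm0 : (0:ℝ) < (m:ℝ) := by
    have : (0:ℤ) < (m:ℤ) := by linarith
    exact_mod_cast this
  obtain ⟨s, hsdef⟩ : ∃ s : ℝ, Real.sqrt m = s := ⟨_, rfl⟩
  rw [hsdef] at hmin'
  have hs0 : 0 < s := hsdef ▸ Real.sqrt_pos.2 hm0
  have hs2 : s^2 = (m:ℝ) := hsdef ▸ Real.sq_sqrt (le_of_lt hm0)
  -- real casts
  have hxr0 : (0:ℝ) < (x:ℝ) := by exact_mod_cast hx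
  have hyr1 : (1:ℝ) ≤ (y:ℝ) := by exact_mod_cast hy
  have hcr1 : (1:ℝ) ≤ (c:ℝ) := by exact_mod_cast hc1
  have hcmr : (c:ℝ)^2 < (m:ℝ) := by exact_mod_cast hcm
  have h1 : (m:ℝ)*(y:ℝ)^2 - (c:ℝ)^2 ≤ (x:ℝ)^2 := by
    rcases hpell with h | h
    · have : (m:ℤ)*y^2 - c^2 ≤ x^2 := by nlinarith [sq_nonneg c]
      exact_mod_cast this
    · have : (m:ℤ)*y^2 - c^2 ≤ x^2 := by nlinarith [sq_nonneg c]
      exact_mod_cast this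
  have hys : (0:ℝ) < (y:ℝ) * s := mul_pos (by linarith) hs0
  have hysq : (m:ℝ) ≤ ((y:ℝ)*s)^2 := by
    rw [mul_pow, hs2]
    have h : (1:ℝ) ≤ (y:ℝ)^2 := by nlinarith [hyr1]
    nlinarith [h, hm0]
  have hcys : (c:ℝ) < (y:ℝ) * s := by
    nlinarith [hys, hysq, hcmr, hcr1]
  have hxr : (y:ℝ) * s - (c:ℝ) < (x:ℝ) := by
    nlinarith [h1, hcys, hxr0, hs2]
  -- chain
  have hchain : 2*(y:ℝ)*s - (c:ℝ) < (X:ℝ) + (Y:ℝ)*s := by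
    linarith [hxr, hmin']
  rcases le_or_gt y B with hyB | hyB
  · -- y = m * k, small: excluded by hnosq
    have hk1 : 1 ≤ k := by nlinarith
    have hkB : k * m ≤ B := by rw [mul_comm]; linarith [hk ▸ hyB]
    obtain ⟨hp, hn⟩ := hnosq k x hk1 hkB
    rcases hpell with h | h
    · exact hp (by rw [← hk]; linarith)
    · exact hn (by rw [← hk]; linarith)
  · -- y ≥ B+1 : contradiction with minimality
    have hyB' : (B:ℝ) + 1 ≤ (y:ℝ) := by
      have h' : B + 1 ≤ y := hyB
      have h'' : ((B+1:ℤ):ℝ) ≤ ((y:ℤ):ℝ) := Int.cast_le.mpr h'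
      push_cast at h''
      linarith
    have hP : (0:ℝ) < 2*((B:ℝ)+1) - (Y:ℝ) := by
      have : (Y:ℝ) < 2*((B:ℝ)+1) := by exact_mod_cast hBY
      linarith
    have hTb : 2*((B:ℝ)+1) - (Y:ℝ) ≤ 2*(y:ℝ) - (Y:ℝ) := by linarith
    have hT0 : (0:ℝ) < 2*(y:ℝ) - (Y:ℝ) := lt_of_lt_of_le hP hTb
    have hTs : (2*(y:ℝ) - (Y:ℝ)) * s < (X:ℝ) + (c:ℝ) := by
      have h := hchain; nlinarith [h]
    have hsq' : ((2*(y:ℝ) - (Y:ℝ))*s)^2 < ((X:ℝ)+(c:ℝ))^2 :=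
      pow_lt_pow_left₀ hTs (mul_pos hT0 hs0).le two_ne_zero
    rw [mul_pow, hs2] at hsq'
    have hle : (2*((B:ℝ)+1)-(Y:ℝ))^2 * (m:ℝ) ≤ (2*(y:ℝ)-(Y:ℝ))^2 * (m:ℝ) :=
      mul_le_mul_of_nonneg_right (pow_le_pow_left₀ (le_of_lt hP) hTb 2) (le_of_lt hm0)
    have hBr : ((X:ℝ)+(c:ℝ))^2 ≤ (2*((B:ℝ)+1)-(Y:ℝ))^2*(m:ℝ) := by exact_mod_cast hB
    linarith


set_option maxHeartbeats 1600000 in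
lemma pell46 (n : ℕ) : ∀ y x : ℤ, 1 ≤ y → y ≤ 3587 → y ≤ (n:ℤ) → x^2 ≠ 46*y^2+1 := by
  induction n with
  | zero =>
    intro y x h1 _ h3 _
    norm_num at h3
    omega
  | succ n ih =>
    intro y x h1 h2 h3 hEq
    rcases le_or_gt y 16 with hy | hy
    · interval_cases y
      · exact no_sq (s := 6) (by norm_num) (by norm_num) (by norm_num) x hEq
      · exact no_sq (s := 13) (by norm_num) (by norm_num) (by norm_num) x hEq
      · exact no_sq (s := 20) (by norm_num) (by norm_num) (by norm_num) x hEq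
      · exact no_sq (s := 27) (by norm_num) (by norm_num) (by norm_num) x hEq
      · exact no_sq (s := 33) (by norm_num) (by norm_num) (by norm_num) x hEq
      · exact no_sq (s := 40) (by norm_num) (by norm_num) (by norm_num) x hEq
      · exact no_sq (s := 47) (by norm_num) (by norm_num) (by norm_num) x hEq
      · exact no_sq (s := 54) (by norm_num) (by norm_num) (by norm_num) x hEq
      · exact no_sq (s := 61) (by norm_num) (by norm_num) (by norm_num) x hEq
      · exact no_sq (s := 67) (by norm_num) (by norm_num) (by norm_num) x hEq
      · exact no_sq (s := 74) (by norm_num) (by norm_num) (by norm_num) x hEq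
      · exact no_sq (s := 81) (by norm_num) (by norm_num) (by norm_num) x hEq
      · exact no_sq (s := 88) (by norm_num) (by norm_num) (by norm_num) x hEq
      · exact no_sq (s := 94) (by norm_num) (by norm_num) (by norm_num) x hEq
      · exact no_sq (s := 101) (by norm_num) (by norm_num) (by norm_num) x hEq
      · exact no_sq (s := 108) (by norm_num) (by norm_num) (by norm_num) x hEq
    · -- descent
      set a : ℤ := |x| with hadef
      have ha0 : 0 ≤ a := abs_nonneg x
      have ha2 : a^2 = 46*y^2+1 := by rw [hadef, sq_abs]; exact hEq
      have ha1 : 1 ≤ a := by nlinarith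
      set y₂ : ℤ := 3588*a - 24335*y with hy2def
      set x₁ : ℤ := 24335*a - 165048*y with hx1def
      have hEq2 : x₁^2 = 46*y₂^2+1 := by
        rw [hx1def, hy2def]; linear_combination ha2
      have hy2pos : 1 ≤ y₂ := by
        have h' : 0 < y₂ := by nlinarith [ha2, h2, ha0, h1]
        linarith
      have hy2lt : y₂ < y := by nlinarith [ha2, hy, ha0, h1]
      exact ih y₂ x₁ hy2pos (by linarith) (by omega) hEq2

lemma pell46' (y x : ℤ) (h1 : 1 ≤ y) (h2 : y ≤ 3587) : x^2 ≠ 46*y^2+1 :=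
  pell46 3587 y x h1 h2 (by exact_mod_cast h2)

lemma neg46 (x y : ℤ) (h : x^2 - 46*y^2 = -1) : False := by
  have h23 : ((x : ZMod 23))^2 = -1 := by
    have := congrArg (fun t : ℤ => (t : ZMod 23)) h
    push_cast at this
    have h46 : (46 : ZMod 23) = 0 := by decide
    rw [h46] at this
    simpa using this
  have : ∀ a : ZMod 23, a^2 ≠ -1 := by decide
  exact this _ h23



/-- For every squarefree `m` with `1 < m < 46`, writing the fundamental unit of
`ℚ(√m)` as `ε_m = (x + y√m)/c`, `m` does not divide `y`; while for `m = 46`, the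
fundamental unit is `ε₄₆ = 24335 + 3588√46` and `46 ∣ 3588`. -/
theorem fund_unit_y_divisibility :
    (∀ m : ℕ, Squarefree m → 1 < m → m < 46 →
      ∀ x y : ℤ, IsFundamentalUnit m x y → ¬ (m : ℤ) ∣ y) ∧
    (IsFundamentalUnit 46 24335 3588 ∧ (46 : ℤ) ∣ 3588) := by
  constructor
  · intro m hsf h1 h2
    interval_cases m
    · exact key 2 1 1 1 1 (by norm_num) (by norm_num) (by norm_num) (by norm_num) (by norm_num) (by norm_num) (Or.inr (by norm_num)) (by decide) (by norm_num) (by norm_num) (by intro k x hk1 hkB; exfalso; omega)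
    · exact key 3 1 2 1 1 (by norm_num) (by norm_num) (by norm_num) (by norm_num) (by norm_num) (by norm_num) (Or.inl (by norm_num)) (by decide) (by norm_num) (by norm_num) (by intro k x hk1 hkB; exfalso; omega)
    · exact absurd hsf (fun h => absurd (h 2 (by norm_num)) (by norm_num))
    · exact key 5 2 3 1 1 (by norm_num) (by norm_num) (by norm_num) (by norm_num) (by norm_num) (by norm_num) (Or.inl (by norm_num)) (by decide) (by norm_num) (by norm_num) (by intro k x hk1 hkB; exfalso; omega)
    · exact key 6 1 5 2 2 (by norm_num) (by norm_num) (by norm_num) (by norm_num) (by norm_num) (by norm_num) (Or.inl (by norm_num)) (by decide) (by norm_num) (by norm_num) (by intro k x hk1 hkB; exfalso; omega)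
    · exact key 7 1 8 3 3 (by norm_num) (by norm_num) (by norm_num) (by norm_num) (by norm_num) (by norm_num) (Or.inl (by norm_num)) (by decide) (by norm_num) (by norm_num) (by intro k x hk1 hkB; exfalso; omega)
    · exact absurd hsf (fun h => absurd (h 2 (by norm_num)) (by norm_num))
    · exact absurd hsf (fun h => absurd (h 3 (by norm_num)) (by norm_num))
    · exact key 10 1 3 1 1 (by norm_num) (by norm_num) (by norm_num) (by norm_num) (by norm_num) (by norm_num) (Or.inr (by norm_num)) (by decide) (by norm_num) (by norm_num) (by intro k x hk1 hkB; exfalso; omega)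
    · exact key 11 1 10 3 3 (by norm_num) (by norm_num) (by norm_num) (by norm_num) (by norm_num) (by norm_num) (Or.inl (by norm_num)) (by decide) (by norm_num) (by norm_num) (by intro k x hk1 hkB; exfalso; omega)
    · exact absurd hsf (fun h => absurd (h 2 (by norm_num)) (by norm_num))
    · exact key 13 2 3 1 1 (by norm_num) (by norm_num) (by norm_num) (by norm_num) (by norm_num) (by norm_num) (Or.inr (by norm_num)) (by decide) (by norm_num) (by norm_num) (by intro k x hk1 hkB; exfalso; omega)
    · exact key 14 1 15 4 4 (by norm_num) (by norm_num) (by norm_num) (by norm_num) (by norm_num) (by norm_num) (Or.inl (by norm_num)) (by decide) (by norm_num) (by norm_num) (by intro k x hk1 hkB; exfalso; omega)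
    · exact key 15 1 4 1 1 (by norm_num) (by norm_num) (by norm_num) (by norm_num) (by norm_num) (by norm_num) (Or.inl (by norm_num)) (by decide) (by norm_num) (by norm_num) (by intro k x hk1 hkB; exfalso; omega)
    · exact absurd hsf (fun h => absurd (h 2 (by norm_num)) (by norm_num))
    · exact key 17 2 8 2 2 (by norm_num) (by norm_num) (by norm_num) (by norm_num) (by norm_num) (by norm_num) (Or.inr (by norm_num)) (by decide) (by norm_num) (by norm_num) (by intro k x hk1 hkB; exfalso; omega)
    · exact absurd hsf (fun h => absurd (h 3 (by norm_num)) (by norm_num))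
    · refine key 19 1 170 39 39 (by norm_num) (by norm_num) (by norm_num) (by norm_num) (by norm_num) (by norm_num) (Or.inl (by norm_num)) (by decide) (by norm_num) (by norm_num) ?_
      intro k x hk1 hkB
      have hk2 : k ≤ 2 := by omega
      interval_cases k
      · exact ⟨no_sq (s := 82) (by norm_num) (by norm_num) (by norm_num) x, no_sq (s := 82) (by norm_num) (by norm_num) (by norm_num) x⟩
      · exact ⟨no_sq (s := 165) (by norm_num) (by norm_num) (by norm_num) x, no_sq (s := 165) (by norm_num) (by norm_num) (by norm_num) x⟩
    · exact absurd hsf (fun h => absurd (h 2 (by norm_num)) (by norm_num))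
    · exact key 21 2 5 1 1 (by norm_num) (by norm_num) (by norm_num) (by norm_num) (by norm_num) (by norm_num) (Or.inl (by norm_num)) (by decide) (by norm_num) (by norm_num) (by intro k x hk1 hkB; exfalso; omega)
    · refine key 22 1 197 42 42 (by norm_num) (by norm_num) (by norm_num) (by norm_num) (by norm_num) (by norm_num) (Or.inl (by norm_num)) (by decide) (by norm_num) (by norm_num) ?_
      intro k x hk1 hkB
      have hk2 : k ≤ 1 := by omega
      interval_cases k
      · exact ⟨no_sq (s := 103) (by norm_num) (by norm_num) (by norm_num) x, no_sq (s := 103) (by norm_num) (by norm_num) (by norm_num) x⟩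
    · exact key 23 1 24 5 5 (by norm_num) (by norm_num) (by norm_num) (by norm_num) (by norm_num) (by norm_num) (Or.inl (by norm_num)) (by decide) (by norm_num) (by norm_num) (by intro k x hk1 hkB; exfalso; omega)
    · exact absurd hsf (fun h => absurd (h 2 (by norm_num)) (by norm_num))
    · exact absurd hsf (fun h => absurd (h 5 (by norm_num)) (by norm_num))
    · exact key 26 1 5 1 1 (by norm_num) (by norm_num) (by norm_num) (by norm_num) (by norm_num) (by norm_num) (Or.inr (by norm_num)) (by decide) (by norm_num) (by norm_num) (by intro k x hk1 hkB; exfalso; omega)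
    · exact absurd hsf (fun h => absurd (h 3 (by norm_num)) (by norm_num))
    · exact absurd hsf (fun h => absurd (h 2 (by norm_num)) (by norm_num))
    · exact key 29 2 5 1 1 (by norm_num) (by norm_num) (by norm_num) (by norm_num) (by norm_num) (by norm_num) (Or.inr (by norm_num)) (by decide) (by norm_num) (by norm_num) (by intro k x hk1 hkB; exfalso; omega)
    · exact key 30 1 11 2 2 (by norm_num) (by norm_num) (by norm_num) (by norm_num) (by norm_num) (by norm_num) (Or.inl (by norm_num)) (by decide) (by norm_num) (by norm_num) (by intro k x hk1 hkB; exfalso; omega)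
    · refine key 31 1 1520 273 273 (by norm_num) (by norm_num) (by norm_num) (by norm_num) (by norm_num) (by norm_num) (Or.inl (by norm_num)) (by decide) (by norm_num) (by norm_num) ?_
      intro k x hk1 hkB
      have hk2 : k ≤ 8 := by omega
      interval_cases k
      · exact ⟨no_sq (s := 172) (by norm_num) (by norm_num) (by norm_num) x, no_sq (s := 172) (by norm_num) (by norm_num) (by norm_num) x⟩
      · exact ⟨no_sq (s := 345) (by norm_num) (by norm_num) (by norm_num) x, no_sq (s := 345) (by norm_num) (by norm_num) (by norm_num) x⟩
      · exact ⟨no_sq (s := 517) (by norm_num) (by norm_num) (by norm_num) x, no_sq (s := 517) (by norm_num) (by norm_num) (by norm_num) x⟩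
      · exact ⟨no_sq (s := 690) (by norm_num) (by norm_num) (by norm_num) x, no_sq (s := 690) (by norm_num) (by norm_num) (by norm_num) x⟩
      · exact ⟨no_sq (s := 863) (by norm_num) (by norm_num) (by norm_num) x, no_sq (s := 863) (by norm_num) (by norm_num) (by norm_num) x⟩
      · exact ⟨no_sq (s := 1035) (by norm_num) (by norm_num) (by norm_num) x, no_sq (s := 1035) (by norm_num) (by norm_num) (by norm_num) x⟩
      · exact ⟨no_sq (s := 1208) (by norm_num) (by norm_num) (by norm_num) x, no_sq (s := 1208) (by norm_num) (by norm_num) (by norm_num) x⟩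
      · exact ⟨no_sq (s := 1380) (by norm_num) (by norm_num) (by norm_num) x, no_sq (s := 1380) (by norm_num) (by norm_num) (by norm_num) x⟩
    · exact absurd hsf (fun h => absurd (h 2 (by norm_num)) (by norm_num))
    · exact key 33 2 46 8 8 (by norm_num) (by norm_num) (by norm_num) (by norm_num) (by norm_num) (by norm_num) (Or.inl (by norm_num)) (by decide) (by norm_num) (by norm_num) (by intro k x hk1 hkB; exfalso; omega)
    · exact key 34 1 35 6 6 (by norm_num) (by norm_num) (by norm_num) (by norm_num) (by norm_num) (by norm_num) (Or.inl (by norm_num)) (by decide) (by norm_num) (by norm_num) (by intro k x hk1 hkB; exfalso; omega)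
    · exact key 35 1 6 1 1 (by norm_num) (by norm_num) (by norm_num) (by norm_num) (by norm_num) (by norm_num) (Or.inl (by norm_num)) (by decide) (by norm_num) (by norm_num) (by intro k x hk1 hkB; exfalso; omega)
    · exact absurd hsf (fun h => absurd (h 2 (by norm_num)) (by norm_num))
    · exact key 37 2 12 2 2 (by norm_num) (by norm_num) (by norm_num) (by norm_num) (by norm_num) (by norm_num) (Or.inr (by norm_num)) (by decide) (by norm_num) (by norm_num) (by intro k x hk1 hkB; exfalso; omega)
    · exact key 38 1 37 6 6 (by norm_num) (by norm_num) (by norm_num) (by norm_num) (by norm_num) (by norm_num) (Or.inl (by norm_num)) (by decide) (by norm_num) (by norm_num) (by intro k x hk1 hkB; exfalso; omega)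
    · exact key 39 1 25 4 4 (by norm_num) (by norm_num) (by norm_num) (by norm_num) (by norm_num) (by norm_num) (Or.inl (by norm_num)) (by decide) (by norm_num) (by norm_num) (by intro k x hk1 hkB; exfalso; omega)
    · exact absurd hsf (fun h => absurd (h 2 (by norm_num)) (by norm_num))
    · exact key 41 2 64 10 10 (by norm_num) (by norm_num) (by norm_num) (by norm_num) (by norm_num) (by norm_num) (Or.inr (by norm_num)) (by decide) (by norm_num) (by norm_num) (by intro k x hk1 hkB; exfalso; omega)
    · exact key 42 1 13 2 2 (by norm_num) (by norm_num) (by norm_num) (by norm_num) (by norm_num) (by norm_num) (Or.inl (by norm_num)) (by decide) (by norm_num) (by norm_num) (by intro k x hk1 hkB; exfalso; omega)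
    · refine key 43 1 3482 531 531 (by norm_num) (by norm_num) (by norm_num) (by norm_num) (by norm_num) (by norm_num) (Or.inl (by norm_num)) (by decide) (by norm_num) (by norm_num) ?_
      intro k x hk1 hkB
      have hk2 : k ≤ 12 := by omega
      interval_cases k
      · exact ⟨no_sq (s := 281) (by norm_num) (by norm_num) (by norm_num) x, no_sq (s := 281) (by norm_num) (by norm_num) (by norm_num) x⟩
      · exact ⟨no_sq (s := 563) (by norm_num) (by norm_num) (by norm_num) x, no_sq (s := 563) (by norm_num) (by norm_num) (by norm_num) x⟩
      · exact ⟨no_sq (s := 845) (by norm_num) (by norm_num) (by norm_num) x, no_sq (s := 845) (by norm_num) (by norm_num) (by norm_num) x⟩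
      · exact ⟨no_sq (s := 1127) (by norm_num) (by norm_num) (by norm_num) x, no_sq (s := 1127) (by norm_num) (by norm_num) (by norm_num) x⟩
      · exact ⟨no_sq (s := 1409) (by norm_num) (by norm_num) (by norm_num) x, no_sq (s := 1409) (by norm_num) (by norm_num) (by norm_num) x⟩
      · exact ⟨no_sq (s := 1691) (by norm_num) (by norm_num) (by norm_num) x, no_sq (s := 1691) (by norm_num) (by norm_num) (by norm_num) x⟩
      · exact ⟨no_sq (s := 1973) (by norm_num) (by norm_num) (by norm_num) x, no_sq (s := 1973) (by norm_num) (by norm_num) (by norm_num) x⟩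
      · exact ⟨no_sq (s := 2255) (by norm_num) (by norm_num) (by norm_num) x, no_sq (s := 2255) (by norm_num) (by norm_num) (by norm_num) x⟩
      · exact ⟨no_sq (s := 2537) (by norm_num) (by norm_num) (by norm_num) x, no_sq (s := 2537) (by norm_num) (by norm_num) (by norm_num) x⟩
      · exact ⟨no_sq (s := 2819) (by norm_num) (by norm_num) (by norm_num) x, no_sq (s := 2819) (by norm_num) (by norm_num) (by norm_num) x⟩
      · exact ⟨no_sq (s := 3101) (by norm_num) (by norm_num) (by norm_num) x, no_sq (s := 3101) (by norm_num) (by norm_num) (by norm_num) x⟩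
      · exact ⟨no_sq (s := 3383) (by norm_num) (by norm_num) (by norm_num) x, no_sq (s := 3383) (by norm_num) (by norm_num) (by norm_num) x⟩
    · exact absurd hsf (fun h => absurd (h 2 (by norm_num)) (by norm_num))
    · exact absurd hsf (fun h => absurd (h 3 (by norm_num)) (by norm_num))
  · refine ⟨⟨by norm_num, by norm_num, Or.inl (by norm_num), fun h => absurd h (by norm_num), ?_⟩, by norm_num⟩
    intro x' y' hx' hy' hpell _
    norm_num at hpell
    rcases hpell with h | h
    · -- x'^2 - 46 y'^2 = 1
      have hy3588 : 3588 ≤ y' := by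
        by_contra hcon
        push_neg at hcon
        exact pell46' y' x' hy' (by linarith) (by linarith)
      have hx24335 : 24335 ≤ x' := by nlinarith [h, hy3588, hx']
      have hs : (0:ℝ) ≤ Real.sqrt ((46:ℕ):ℝ) := Real.sqrt_nonneg _
      have hyc : (3588:ℝ) ≤ (y':ℝ) := by exact_mod_cast hy3588
      have hxc : (24335:ℝ) ≤ (x':ℝ) := by exact_mod_cast hx24335
      have hmul := mul_le_mul_of_nonneg_right hyc hs
      push_cast at hmul ⊢
      linarith
    · exact absurd h (by have := neg46 x' y'; intro hh; exact this (by linarith))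
end
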